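/- Entropic $I_{33}$ (Collins–Gisin) inequality: for any six jointly distributed discrete random variables $A_0,A_1,A_2,B_0,B_1,B_2$, $H(A_0B_0)+H(A_1B_0)+H(A_2B_0)+H(A_0B_1)+H(A_1B_1)-H(A_2B_1)+H(A_0B_2)-H(A_1B_2)-2H(B_0)-H(B_1)-H(A_0)\geq 0$. -/

import Mathlib

open Finset

/-- Shannon entropy of a discrete random variable `X` on a finite probability
space with weights `p`. -/
noncomputable def shannonEntropy {Ω α : Type*} [Fintype Ω] [Fintype α] [DecidableEq α]
    (p : Ω → ℝ) (X : Ω → α) : ℝ :=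
  ∑ x : α, Real.negMulLog (∑ ω ∈ Finset.univ.filter (fun ω => X ω = x), p ω)

open Real

section basic
variable {Ω α β γ : Type*} [Fintype Ω] (p : Ω → ℝ)

noncomputable def PP [Fintype α] [DecidableEq α] (X : Ω → α) (x : α) : ℝ :=
  ∑ ω ∈ Finset.univ.filter (fun ω => X ω = x), p ω

lemma shannonEntropy_eq [Fintype α] [DecidableEq α] (X : Ω → α) :
    shannonEntropy p X = ∑ x : α, Real.negMulLog (PP p X x) := rfl

lemma PP_nonneg [Fintype α] [DecidableEq α] (hp : ∀ ω, 0 ≤ p ω) (X : Ω → α) (x : α) :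
    0 ≤ PP p X x :=
  Finset.sum_nonneg fun ω _ => hp ω

lemma sum_PP [Fintype α] [DecidableEq α] (X : Ω → α) :
    ∑ x : α, PP p X x = ∑ ω, p ω :=
  Finset.sum_fiberwise _ _ _

lemma PP_comp [Fintype α] [DecidableEq α] [Fintype β] [DecidableEq β]
    (f : α → β) (X : Ω → α) (y : β) :
    PP p (fun ω => f (X ω)) y = ∑ x ∈ Finset.univ.filter (fun x => f x = y), PP p X x := by
  classical
  unfold PP
  have hd : Set.PairwiseDisjoint ↑(Finset.univ.filter (fun x => f x = y))
      (fun x => Finset.univ.filter (fun ω => X ω = x)) := by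
    intro x _ x' _ hxx'
    exact Finset.disjoint_left.2 fun ω h1 h2 =>
      hxx' ((Finset.mem_filter.1 h1).2.symm.trans (Finset.mem_filter.1 h2).2)
  rw [← Finset.sum_biUnion hd]
  congr 1
  ext ω
  simp [Finset.mem_biUnion]

-- superadditivity
lemma negMulLog_sum_le {ι : Type*} (s : Finset ι) (a : ι → ℝ) (ha : ∀ i ∈ s, 0 ≤ a i) :
    Real.negMulLog (∑ i ∈ s, a i) ≤ ∑ i ∈ s, Real.negMulLog (a i) := by
  have h1 : Real.negMulLog (∑ i ∈ s, a i) = ∑ i ∈ s, a i * (-Real.log (∑ j ∈ s, a j)) := by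
    rw [← Finset.sum_mul, Real.negMulLog]; ring
  rw [h1]
  refine Finset.sum_le_sum fun i hi => ?_
  rcases eq_or_lt_of_le (ha i hi) with h0 | h0
  · simp [← h0]
  · have hT : a i ≤ ∑ j ∈ s, a j := Finset.single_le_sum ha hi
    have : Real.log (a i) ≤ Real.log (∑ j ∈ s, a j) := Real.log_le_log h0 hT
    rw [Real.negMulLog]
    nlinarith

lemma shannonEntropy_comp_le [Fintype α] [DecidableEq α] [Fintype β] [DecidableEq β]
    (hp : ∀ ω, 0 ≤ p ω) (f : α → β) (X : Ω → α) :
    shannonEntropy p (fun ω => f (X ω)) ≤ shannonEntropy p X := by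
  rw [shannonEntropy_eq, shannonEntropy_eq]
  calc ∑ y : β, Real.negMulLog (PP p (fun ω => f (X ω)) y)
      = ∑ y : β, Real.negMulLog (∑ x ∈ Finset.univ.filter (fun x => f x = y), PP p X x) := by
        simp only [PP_comp]
    _ ≤ ∑ y : β, ∑ x ∈ Finset.univ.filter (fun x => f x = y), Real.negMulLog (PP p X x) :=
        Finset.sum_le_sum fun y _ => negMulLog_sum_le _ _ fun x _ => PP_nonneg p hp X x
    _ = ∑ x : α, Real.negMulLog (PP p X x) := Finset.sum_fiberwise _ _ _

lemma shannonEntropy_eq_of [Fintype α] [DecidableEq α] [Fintype β] [DecidableEq β]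
    (hp : ∀ ω, 0 ≤ p ω) (f : α → β) (g : β → α) (X : Ω → α) (Y : Ω → β)
    (h1 : ∀ ω, Y ω = f (X ω)) (h2 : ∀ ω, X ω = g (Y ω)) :
    shannonEntropy p X = shannonEntropy p Y := by
  refine le_antisymm ?_ ?_
  · have : X = fun ω => g (Y ω) := funext h2
    rw [this]; exact shannonEntropy_comp_le p hp g Y
  · have : Y = fun ω => f (X ω) := funext h1
    rw [this]; exact shannonEntropy_comp_le p hp f X

end basic


section key
variable {α β γ : Type*} [Fintype α] [Fintype β] [Fintype γ]

lemma comm3' (f : α → β → γ → ℝ) :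
    ∑ y, ∑ z, ∑ x, f x y z = ∑ x, ∑ y, ∑ z, f x y z := by
  calc ∑ y, ∑ z, ∑ x, f x y z = ∑ y, ∑ x, ∑ z, f x y z :=
        Finset.sum_congr rfl fun y _ => Finset.sum_comm
    _ = ∑ x, ∑ y, ∑ z, f x y z := Finset.sum_comm

lemma comm3'' (f : α → β → γ → ℝ) :
    ∑ z, ∑ x, ∑ y, f x y z = ∑ x, ∑ y, ∑ z, f x y z := by
  calc ∑ z, ∑ x, ∑ y, f x y z = ∑ x, ∑ z, ∑ y, f x y z := Finset.sum_comm
    _ = ∑ x, ∑ y, ∑ z, f x y z := Finset.sum_congr rfl fun x _ => Finset.sum_comm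

lemma key (q : α → β → γ → ℝ) (hq : ∀ x y z, 0 ≤ q x y z) :
    (∑ z, Real.negMulLog (∑ x, ∑ y, q x y z)) + ∑ x, ∑ y, ∑ z, Real.negMulLog (q x y z)
      ≤ (∑ x, ∑ z, Real.negMulLog (∑ y, q x y z))
        + ∑ y, ∑ z, Real.negMulLog (∑ x, q x y z) := by
  classical
  have ha0 : ∀ x z, 0 ≤ ∑ y, q x y z := fun x z => Finset.sum_nonneg fun y _ => hq x y z
  have hb0 : ∀ y z, 0 ≤ ∑ x, q x y z := fun y z => Finset.sum_nonneg fun x _ => hq x y z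
  have hc0 : ∀ z, 0 ≤ ∑ x, ∑ y, q x y z := fun z => Finset.sum_nonneg fun x _ => ha0 x z
  have e1 : ∑ x, ∑ z, Real.negMulLog (∑ y, q x y z)
      = ∑ x, ∑ y, ∑ z, q x y z * (-Real.log (∑ y', q x y' z)) := by
    refine Finset.sum_congr rfl fun x _ => ?_
    rw [Finset.sum_comm]
    refine Finset.sum_congr rfl fun z _ => ?_
    rw [Real.negMulLog, ← Finset.sum_mul]; ring
  have e2 : ∑ y, ∑ z, Real.negMulLog (∑ x, q x y z)
      = ∑ x, ∑ y, ∑ z, q x y z * (-Real.log (∑ x', q x' y z)) := by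
    rw [← comm3' (fun x y z => q x y z * (-Real.log (∑ x', q x' y z)))]
    refine Finset.sum_congr rfl fun y _ => Finset.sum_congr rfl fun z _ => ?_
    rw [Real.negMulLog, ← Finset.sum_mul]; ring
  have e3 : ∑ z, Real.negMulLog (∑ x, ∑ y, q x y z)
      = ∑ x, ∑ y, ∑ z, q x y z * (-Real.log (∑ x', ∑ y', q x' y' z)) := by
    rw [← comm3'' (fun x y z => q x y z * (-Real.log (∑ x', ∑ y', q x' y' z)))]
    refine Finset.sum_congr rfl fun z _ => ?_
    have : ∑ x, ∑ y, q x y z * (-Real.log (∑ x', ∑ y', q x' y' z))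
        = (∑ x, ∑ y, q x y z) * (-Real.log (∑ x', ∑ y', q x' y' z)) := by
      rw [Finset.sum_mul]
      exact Finset.sum_congr rfl fun x _ => (Finset.sum_mul _ _ _).symm
    rw [this, Real.negMulLog]; ring
  have e4 : ∑ x, ∑ y, ∑ z, Real.negMulLog (q x y z)
      = ∑ x, ∑ y, ∑ z, q x y z * (-Real.log (q x y z)) := by
    refine Finset.sum_congr rfl fun x _ => Finset.sum_congr rfl fun y _ =>
      Finset.sum_congr rfl fun z _ => ?_
    rw [Real.negMulLog]; ring
  rw [e1, e2, e3, e4]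
  have main : ∀ x y z,
      q x y z - (∑ y', q x y' z) * (∑ x', q x' y z) / (∑ x', ∑ y', q x' y' z)
        ≤ (q x y z * (-Real.log (∑ y', q x y' z)) + q x y z * (-Real.log (∑ x', q x' y z)))
          - (q x y z * (-Real.log (∑ x', ∑ y', q x' y' z))
              + q x y z * (-Real.log (q x y z))) := by
    intro x y z
    rcases eq_or_lt_of_le (hq x y z) with h0 | h0
    · have hnn : 0 ≤ (∑ y', q x y' z) * (∑ x', q x' y z) / (∑ x', ∑ y', q x' y' z) :=
        div_nonneg (mul_nonneg (ha0 x z) (hb0 y z)) (hc0 z)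
      rw [← h0]
      simpa using hnn
    · have haq : q x y z ≤ ∑ y', q x y' z :=
        Finset.single_le_sum (fun y' _ => hq x y' z) (Finset.mem_univ y)
      have hbq : q x y z ≤ ∑ x', q x' y z :=
        Finset.single_le_sum (fun x' _ => hq x' y z) (Finset.mem_univ x)
      have hac : (∑ y', q x y' z) ≤ ∑ x', ∑ y', q x' y' z :=
        Finset.single_le_sum (f := fun x' => ∑ y', q x' y' z)
          (fun x' _ => ha0 x' z) (Finset.mem_univ x)
      have ha' : 0 < ∑ y', q x y' z := lt_of_lt_of_le h0 haq
      have hb' : 0 < ∑ x', q x' y z := lt_of_lt_of_le h0 hbq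
      have hc' : 0 < ∑ x', ∑ y', q x' y' z := lt_of_lt_of_le ha' hac
      have hlog : Real.log (((∑ y', q x y' z) * (∑ x', q x' y z) / (∑ x', ∑ y', q x' y' z))
            / q x y z)
          ≤ ((∑ y', q x y' z) * (∑ x', q x' y z) / (∑ x', ∑ y', q x' y' z)) / q x y z - 1 :=
        Real.log_le_sub_one_of_pos (by positivity)
      rw [Real.log_div (by positivity) (ne_of_gt h0),
        Real.log_div (by positivity) (ne_of_gt hc'),
        Real.log_mul (ne_of_gt ha') (ne_of_gt hb')] at hlog
      have hmul := mul_le_mul_of_nonneg_left hlog (le_of_lt h0)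
      have hq' : q x y z * (((∑ y', q x y' z) * (∑ x', q x' y z)
            / (∑ x', ∑ y', q x' y' z)) / q x y z - 1)
          = (∑ y', q x y' z) * (∑ x', q x' y z) / (∑ x', ∑ y', q x' y' z) - q x y z := by
        field_simp
      rw [hq'] at hmul
      nlinarith [hmul]
  have perz : ∀ z, 0 ≤ ∑ x, ∑ y,
      (q x y z - (∑ y', q x y' z) * (∑ x', q x' y z) / (∑ x', ∑ y', q x' y' z)) := by
    intro z
    have h1 : ∑ x, ∑ y, (∑ y', q x y' z) * (∑ x', q x' y z) / (∑ x', ∑ y', q x' y' z)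
        = (∑ x, ∑ y', q x y' z) * (∑ y, ∑ x', q x' y z) / (∑ x', ∑ y', q x' y' z) := by
      simp only [div_eq_mul_inv]
      rw [Finset.sum_mul, Finset.sum_mul]
      refine Finset.sum_congr rfl fun x _ => ?_
      rw [Finset.mul_sum, Finset.sum_mul]
    have h2 : (∑ y, ∑ x', q x' y z) = ∑ x', ∑ y', q x' y' z := Finset.sum_comm
    have h3 : ∑ x, ∑ y, (q x y z - (∑ y', q x y' z) * (∑ x', q x' y z)
          / (∑ x', ∑ y', q x' y' z))
        = (∑ x, ∑ y, q x y z)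
          - (∑ x, ∑ y', q x y' z) * (∑ y, ∑ x', q x' y z) / (∑ x', ∑ y', q x' y' z) := by
      rw [← h1, ← Finset.sum_sub_distrib]
      exact Finset.sum_congr rfl fun x _ => Finset.sum_sub_distrib _ _
    rw [h3, h2]
    rcases eq_or_lt_of_le (hc0 z) with h4 | h4
    · rw [← h4]; simp
    · rw [mul_div_assoc, div_self (ne_of_gt h4), mul_one, sub_self]
  -- assemble
  have hsum : ∑ x, ∑ y, ∑ z,
      (q x y z - (∑ y', q x y' z) * (∑ x', q x' y z) / (∑ x', ∑ y', q x' y' z))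
      ≤ ∑ x, ∑ y, ∑ z,
        ((q x y z * (-Real.log (∑ y', q x y' z)) + q x y z * (-Real.log (∑ x', q x' y z)))
          - (q x y z * (-Real.log (∑ x', ∑ y', q x' y' z))
              + q x y z * (-Real.log (q x y z)))) :=
    Finset.sum_le_sum fun x _ => Finset.sum_le_sum fun y _ =>
      Finset.sum_le_sum fun z _ => main x y z
  have hnn : 0 ≤ ∑ x, ∑ y, ∑ z,
      (q x y z - (∑ y', q x y' z) * (∑ x', q x' y z) / (∑ x', ∑ y', q x' y' z)) := by
    rw [← comm3'' (fun x y z =>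
      q x y z - (∑ y', q x y' z) * (∑ x', q x' y z) / (∑ x', ∑ y', q x' y' z))]
    exact Finset.sum_nonneg fun z _ => perz z
  have hexp : ∑ x, ∑ y, ∑ z,
      ((q x y z * (-Real.log (∑ y', q x y' z)) + q x y z * (-Real.log (∑ x', q x' y z)))
        - (q x y z * (-Real.log (∑ x', ∑ y', q x' y' z))
            + q x y z * (-Real.log (q x y z))))
      = (∑ x, ∑ y, ∑ z, q x y z * (-Real.log (∑ y', q x y' z)))
        + (∑ x, ∑ y, ∑ z, q x y z * (-Real.log (∑ x', q x' y z)))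
        - ((∑ x, ∑ y, ∑ z, q x y z * (-Real.log (∑ x', ∑ y', q x' y' z)))
          + (∑ x, ∑ y, ∑ z, q x y z * (-Real.log (q x y z)))) := by
    simp only [Finset.sum_sub_distrib, Finset.sum_add_distrib]
  rw [hexp] at hsum
  linarith

end key

section marg
variable {Ω α β γ : Type*} [Fintype Ω] (p : Ω → ℝ)
  [Fintype α] [DecidableEq α] [Fintype β] [DecidableEq β] [Fintype γ] [DecidableEq γ]
  (X : Ω → α) (Y : Ω → β) (Z : Ω → γ)

lemma marg1 (x : α) (z : γ) :
    PP p (fun ω => (X ω, Z ω)) (x, z) = ∑ y, PP p (fun ω => (X ω, Y ω, Z ω)) (x, y, z) := by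
  have h := PP_comp p (fun w : α × β × γ => (w.1, w.2.2)) (fun ω => (X ω, Y ω, Z ω)) (x, z)
  rw [show (fun ω => ((fun w : α × β × γ => (w.1, w.2.2)) ((X ω, Y ω, Z ω))))
      = fun ω => (X ω, Z ω) from rfl] at h
  rw [h, Finset.sum_filter]
  simp only [Fintype.sum_prod_type]
  simp [Prod.ext_iff, ite_and, Finset.sum_ite_eq']

lemma marg2 (y : β) (z : γ) :
    PP p (fun ω => (Y ω, Z ω)) (y, z) = ∑ x, PP p (fun ω => (X ω, Y ω, Z ω)) (x, y, z) := by
  have h := PP_comp p (fun w : α × β × γ => w.2) (fun ω => (X ω, Y ω, Z ω)) (y, z)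
  rw [show (fun ω => ((fun w : α × β × γ => w.2) ((X ω, Y ω, Z ω))))
      = fun ω => (Y ω, Z ω) from rfl] at h
  rw [h, Finset.sum_filter]
  simp only [Fintype.sum_prod_type]
  simp [Prod.ext_iff, ite_and, Finset.sum_ite_eq']

lemma marg3 (z : γ) :
    PP p Z z = ∑ x, ∑ y, PP p (fun ω => (X ω, Y ω, Z ω)) (x, y, z) := by
  have h := PP_comp p (fun w : α × β × γ => w.2.2) (fun ω => (X ω, Y ω, Z ω)) z
  rw [show (fun ω => ((fun w : α × β × γ => w.2.2) ((X ω, Y ω, Z ω)))) = Z from rfl] at h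
  rw [h, Finset.sum_filter]
  simp only [Fintype.sum_prod_type]
  simp [Finset.sum_ite_eq']

end marg


section submod
variable {Ω α β γ : Type*} [Fintype Ω] (p : Ω → ℝ)
  [Fintype α] [DecidableEq α] [Fintype β] [DecidableEq β] [Fintype γ] [DecidableEq γ]
  (X : Ω → α) (Y : Ω → β) (Z : Ω → γ)

lemma shannonEntropy_submod (hp : ∀ ω, 0 ≤ p ω) :
    shannonEntropy p Z + shannonEntropy p (fun ω => (X ω, Y ω, Z ω))
      ≤ shannonEntropy p (fun ω => (X ω, Z ω)) + shannonEntropy p (fun ω => (Y ω, Z ω)) := by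
  have hq : ∀ x y z, 0 ≤ PP p (fun ω => (X ω, Y ω, Z ω)) (x, y, z) :=
    fun x y z => PP_nonneg p hp _ _
  have h1 : shannonEntropy p (fun ω => (X ω, Z ω))
      = ∑ x, ∑ z, Real.negMulLog (∑ y, PP p (fun ω => (X ω, Y ω, Z ω)) (x, y, z)) := by
    rw [shannonEntropy_eq, Fintype.sum_prod_type]
    exact Finset.sum_congr rfl fun x _ => Finset.sum_congr rfl fun z _ => by
      rw [marg1 p X Y Z x z]
  have h2 : shannonEntropy p (fun ω => (Y ω, Z ω))
      = ∑ y, ∑ z, Real.negMulLog (∑ x, PP p (fun ω => (X ω, Y ω, Z ω)) (x, y, z)) := by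
    rw [shannonEntropy_eq, Fintype.sum_prod_type]
    exact Finset.sum_congr rfl fun y _ => Finset.sum_congr rfl fun z _ => by
      rw [marg2 p X Y Z y z]
  have h3 : shannonEntropy p Z
      = ∑ z, Real.negMulLog (∑ x, ∑ y, PP p (fun ω => (X ω, Y ω, Z ω)) (x, y, z)) := by
    rw [shannonEntropy_eq]
    exact Finset.sum_congr rfl fun z _ => by rw [marg3 p X Y Z z]
  have h4 : shannonEntropy p (fun ω => (X ω, Y ω, Z ω))
      = ∑ x, ∑ y, ∑ z, Real.negMulLog (PP p (fun ω => (X ω, Y ω, Z ω)) (x, y, z)) := by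
    rw [shannonEntropy_eq]
    simp only [Fintype.sum_prod_type]
  rw [h1, h2, h3, h4]
  exact key _ hq

end submod

section HS
variable {Ω α ι : Type*} [Fintype Ω] (p : Ω → ℝ)
  [Fintype α] [DecidableEq α] [Fintype ι] [DecidableEq ι] (J : ι → Ω → α)

noncomputable def restr (S : Finset ι) : Ω → (↥S → α) := fun ω x => J (↑x) ω

noncomputable def HS (S : Finset ι) : ℝ := shannonEntropy p (restr J S)

lemma HS_mono (hp : ∀ ω, 0 ≤ p ω) {S T : Finset ι} (h : S ⊆ T) :
    HS p J S ≤ HS p J T := by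
  exact shannonEntropy_comp_le p hp (fun g : (↥T → α) => fun x : ↥S => g ⟨↑x, h x.2⟩)
    (restr J T)

lemma HS_pair_restr (hp : ∀ ω, 0 ≤ p ω) (S T : Finset ι) :
    shannonEntropy p (fun ω => (restr J S ω, restr J T ω)) = HS p J (S ∪ T) := by
  refine (shannonEntropy_eq_of p hp
    (f := fun u : (↥S → α) × (↥T → α) => fun x : ↥(S ∪ T) =>
      if hx : (x : ι) ∈ S then u.1 ⟨x, hx⟩
      else u.2 ⟨x, (Finset.mem_union.1 x.2).resolve_left hx⟩)
    (g := fun v : (↥(S ∪ T) → α) =>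
      (fun x : ↥S => v ⟨x, Finset.mem_union_left _ x.2⟩,
       fun x : ↥T => v ⟨x, Finset.mem_union_right _ x.2⟩))
    (X := fun ω => (restr J S ω, restr J T ω)) (Y := restr J (S ∪ T)) ?_ ?_)
  · intro ω
    funext x
    simp only [restr]
    split <;> rfl
  · intro ω
    rfl

lemma HS_triple_restr (hp : ∀ ω, 0 ≤ p ω) (S T U : Finset ι) :
    shannonEntropy p (fun ω => (restr J S ω, restr J T ω, restr J U ω))
      = HS p J (S ∪ (T ∪ U)) := by
  refine (shannonEntropy_eq_of p hp
    (f := fun u : (↥S → α) × (↥T → α) × (↥U → α) => fun x : ↥(S ∪ (T ∪ U)) =>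
      if hx : (x : ι) ∈ S then u.1 ⟨x, hx⟩
      else if hx' : (x : ι) ∈ T then u.2.1 ⟨x, hx'⟩
      else u.2.2 ⟨x, (Finset.mem_union.1
        ((Finset.mem_union.1 x.2).resolve_left hx)).resolve_left hx'⟩)
    (g := fun v : (↥(S ∪ (T ∪ U)) → α) =>
      (fun x : ↥S => v ⟨x, Finset.mem_union_left _ x.2⟩,
       fun x : ↥T => v ⟨x, Finset.mem_union_right _ (Finset.mem_union_left _ x.2)⟩,
       fun x : ↥U => v ⟨x, Finset.mem_union_right _ (Finset.mem_union_right _ x.2)⟩))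
    (X := fun ω => (restr J S ω, restr J T ω, restr J U ω))
    (Y := restr J (S ∪ (T ∪ U))) ?_ ?_)
  · intro ω
    funext x
    simp only [restr]
    split
    · rfl
    · split <;> rfl
  · intro ω
    rfl

lemma HS_submod (hp : ∀ ω, 0 ≤ p ω) (S T : Finset ι) :
    HS p J (S ∪ T) + HS p J (S ∩ T) ≤ HS p J S + HS p J T := by
  have h := shannonEntropy_submod p (restr J (S \ T)) (restr J (T \ S)) (restr J (S ∩ T)) hp
  rw [HS_triple_restr p J hp, HS_pair_restr p J hp, HS_pair_restr p J hp] at h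
  have e1 : (T \ S) ∪ (S ∩ T) = T := by
    rw [Finset.inter_comm]; exact Finset.sdiff_union_inter T S
  have e3 : (S \ T) ∪ (S ∩ T) = S := Finset.sdiff_union_inter S T
  rw [e1, Finset.sdiff_union_self_eq_union, e3] at h
  have : shannonEntropy p (restr J (S ∩ T)) = HS p J (S ∩ T) := rfl
  linarith [h]

lemma HS_pair (hp : ∀ ω, 0 ≤ p ω) (i j : ι) (hij : i ≠ j) :
    shannonEntropy p (fun ω => (J i ω, J j ω)) = HS p J {i, j} := by
  refine (shannonEntropy_eq_of p hp
    (f := fun u : α × α => fun x : ↥({i, j} : Finset ι) => if (x : ι) = i then u.1 else u.2)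
    (g := fun v : (↥({i, j} : Finset ι) → α) =>
      (v ⟨i, by simp⟩, v ⟨j, by simp⟩))
    (X := fun ω => (J i ω, J j ω)) (Y := restr J {i, j}) ?_ ?_)
  · intro ω
    funext x
    simp only [restr]
    split
    · rename_i h; rw [h]
    · rename_i h
      have : (x : ι) = j := by
        rcases Finset.mem_insert.1 x.2 with h' | h'
        · exact absurd h' h
        · exact Finset.mem_singleton.1 h'
      rw [this]
  · intro ω
    rfl

lemma HS_single (hp : ∀ ω, 0 ≤ p ω) (i : ι) :
    shannonEntropy p (J i) = HS p J {i} := by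
  refine (shannonEntropy_eq_of p hp
    (f := fun a : α => fun _ : ↥({i} : Finset ι) => a)
    (g := fun v : (↥({i} : Finset ι) → α) => v ⟨i, Finset.mem_singleton_self i⟩)
    (X := J i) (Y := restr J {i}) ?_ ?_)
  · intro ω
    funext x
    simp only [restr]
    have : (x : ι) = i := Finset.mem_singleton.1 x.2
    rw [this]
  · intro ω
    rfl

end HS

/-- Entropic Collins–Gisin `I₃₃` inequality for six jointly distributed discrete
random variables. -/
theorem entropic_I33 {Ω α : Type*} [Fintype Ω] [Fintype α] [DecidableEq α]
    (p : Ω → ℝ) (hp : ∀ ω, 0 ≤ p ω) (hsum : ∑ ω, p ω = 1)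
    (A0 A1 A2 B0 B1 B2 : Ω → α) :
    0 ≤ shannonEntropy p (fun ω => (A0 ω, B0 ω)) +
        shannonEntropy p (fun ω => (A1 ω, B0 ω)) +
        shannonEntropy p (fun ω => (A2 ω, B0 ω)) +
        shannonEntropy p (fun ω => (A0 ω, B1 ω)) +
        shannonEntropy p (fun ω => (A1 ω, B1 ω)) -
        shannonEntropy p (fun ω => (A2 ω, B1 ω)) +
        shannonEntropy p (fun ω => (A0 ω, B2 ω)) -
        shannonEntropy p (fun ω => (A1 ω, B2 ω)) -
        2 * shannonEntropy p B0 - shannonEntropy p B1 - shannonEntropy p A0 := by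
  classical
  set J : Fin 6 → Ω → α := fun i ω =>
    if i = 0 then A0 ω else if i = 1 then A1 ω else if i = 2 then A2 ω
    else if i = 3 then B0 ω else if i = 4 then B1 ω else B2 ω with hJ
  have e03 : shannonEntropy p (fun ω => (A0 ω, B0 ω)) = HS p J {0,3} :=
    HS_pair p J hp 0 3 (by decide)
  have e13 : shannonEntropy p (fun ω => (A1 ω, B0 ω)) = HS p J {1,3} :=
    HS_pair p J hp 1 3 (by decide)
  have e23 : shannonEntropy p (fun ω => (A2 ω, B0 ω)) = HS p J {2,3} :=
    HS_pair p J hp 2 3 (by decide)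
  have e04 : shannonEntropy p (fun ω => (A0 ω, B1 ω)) = HS p J {0,4} :=
    HS_pair p J hp 0 4 (by decide)
  have e14 : shannonEntropy p (fun ω => (A1 ω, B1 ω)) = HS p J {1,4} :=
    HS_pair p J hp 1 4 (by decide)
  have e24 : shannonEntropy p (fun ω => (A2 ω, B1 ω)) = HS p J {2,4} :=
    HS_pair p J hp 2 4 (by decide)
  have e05 : shannonEntropy p (fun ω => (A0 ω, B2 ω)) = HS p J {0,5} :=
    HS_pair p J hp 0 5 (by decide)
  have e15 : shannonEntropy p (fun ω => (A1 ω, B2 ω)) = HS p J {1,5} :=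
    HS_pair p J hp 1 5 (by decide)
  have s3 : shannonEntropy p B0 = HS p J {3} := HS_single p J hp 3
  have s4 : shannonEntropy p B1 = HS p J {4} := HS_single p J hp 4
  have s0 : shannonEntropy p A0 = HS p J {0} := HS_single p J hp 0
  have q0 : HS p J {0,1,3} + HS p J {3} ≤ HS p J {0,3} + HS p J {1,3} := by
    have h := HS_submod p J hp ({0,3} : Finset (Fin 6)) {1,3}
    rw [(by decide : ({0,3} : Finset (Fin 6)) ∪ {1,3} = {0,1,3}),
        (by decide : ({0,3} : Finset (Fin 6)) ∩ {1,3} = {3})] at h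
    exact h
  have q1 : HS p J {0,1,4} + HS p J {4} ≤ HS p J {0,4} + HS p J {1,4} := by
    have h := HS_submod p J hp ({0,4} : Finset (Fin 6)) {1,4}
    rw [(by decide : ({0,4} : Finset (Fin 6)) ∪ {1,4} = {0,1,4}),
        (by decide : ({0,4} : Finset (Fin 6)) ∩ {1,4} = {4})] at h
    exact h
  have q2 : HS p J {0,1,2,3,4,5} + HS p J {2,3,4,5} ≤ HS p J {0,2,3,4,5} + HS p J {1,2,3,4,5} := by
    have h := HS_submod p J hp ({0,2,3,4,5} : Finset (Fin 6)) {1,2,3,4,5}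
    rw [(by decide : ({0,2,3,4,5} : Finset (Fin 6)) ∪ {1,2,3,4,5} = {0,1,2,3,4,5}),
        (by decide : ({0,2,3,4,5} : Finset (Fin 6)) ∩ {1,2,3,4,5} = {2,3,4,5})] at h
    exact h
  have q3 : HS p J {0,1,2,5} + HS p J {1,5} ≤ HS p J {0,1,5} + HS p J {1,2,5} := by
    have h := HS_submod p J hp ({0,1,5} : Finset (Fin 6)) {1,2,5}
    rw [(by decide : ({0,1,5} : Finset (Fin 6)) ∪ {1,2,5} = {0,1,2,5}),
        (by decide : ({0,1,5} : Finset (Fin 6)) ∩ {1,2,5} = {1,5})] at h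
    exact h
  have q4 : HS p J {0,1,2,3,4,5} + HS p J {1,3,4,5} ≤ HS p J {0,1,3,4,5} + HS p J {1,2,3,4,5} := by
    have h := HS_submod p J hp ({0,1,3,4,5} : Finset (Fin 6)) {1,2,3,4,5}
    rw [(by decide : ({0,1,3,4,5} : Finset (Fin 6)) ∪ {1,2,3,4,5} = {0,1,2,3,4,5}),
        (by decide : ({0,1,3,4,5} : Finset (Fin 6)) ∩ {1,2,3,4,5} = {1,3,4,5})] at h
    exact h
  have q5 : HS p J {0,1,2,3,4,5} + HS p J {1,2,4,5} ≤ HS p J {0,1,2,4,5} + HS p J {1,2,3,4,5} := by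
    have h := HS_submod p J hp ({0,1,2,4,5} : Finset (Fin 6)) {1,2,3,4,5}
    rw [(by decide : ({0,1,2,4,5} : Finset (Fin 6)) ∪ {1,2,3,4,5} = {0,1,2,3,4,5}),
        (by decide : ({0,1,2,4,5} : Finset (Fin 6)) ∩ {1,2,3,4,5} = {1,2,4,5})] at h
    exact h
  have q6 : HS p J {0,1,2,4,5} + HS p J {1,2,5} ≤ HS p J {0,1,2,5} + HS p J {1,2,4,5} := by
    have h := HS_submod p J hp ({0,1,2,5} : Finset (Fin 6)) {1,2,4,5}
    rw [(by decide : ({0,1,2,5} : Finset (Fin 6)) ∪ {1,2,4,5} = {0,1,2,4,5}),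
        (by decide : ({0,1,2,5} : Finset (Fin 6)) ∩ {1,2,4,5} = {1,2,5})] at h
    exact h
  have q7 : HS p J {0,1,3,4,5} + HS p J {1,3,4} ≤ HS p J {0,1,3,4} + HS p J {1,3,4,5} := by
    have h := HS_submod p J hp ({0,1,3,4} : Finset (Fin 6)) {1,3,4,5}
    rw [(by decide : ({0,1,3,4} : Finset (Fin 6)) ∪ {1,3,4,5} = {0,1,3,4,5}),
        (by decide : ({0,1,3,4} : Finset (Fin 6)) ∩ {1,3,4,5} = {1,3,4})] at h
    exact h
  have q8 : HS p J {1,2,3,4} + HS p J {3,4} ≤ HS p J {1,3,4} + HS p J {2,3,4} := by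
    have h := HS_submod p J hp ({1,3,4} : Finset (Fin 6)) {2,3,4}
    rw [(by decide : ({1,3,4} : Finset (Fin 6)) ∪ {2,3,4} = {1,2,3,4}),
        (by decide : ({1,3,4} : Finset (Fin 6)) ∩ {2,3,4} = {3,4})] at h
    exact h
  have q9 : HS p J {1,2,3,4,5} + HS p J {2,4,5} ≤ HS p J {1,2,4,5} + HS p J {2,3,4,5} := by
    have h := HS_submod p J hp ({1,2,4,5} : Finset (Fin 6)) {2,3,4,5}
    rw [(by decide : ({1,2,4,5} : Finset (Fin 6)) ∪ {2,3,4,5} = {1,2,3,4,5}),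
        (by decide : ({1,2,4,5} : Finset (Fin 6)) ∩ {2,3,4,5} = {2,4,5})] at h
    exact h
  have q10 : HS p J {0,1,5} + HS p J {0} ≤ HS p J {0,1} + HS p J {0,5} := by
    have h := HS_submod p J hp ({0,1} : Finset (Fin 6)) {0,5}
    rw [(by decide : ({0,1} : Finset (Fin 6)) ∪ {0,5} = {0,1,5}),
        (by decide : ({0,1} : Finset (Fin 6)) ∩ {0,5} = {0})] at h
    exact h
  have q11 : HS p J {1,2,3,4,5} + HS p J {2,3,4} ≤ HS p J {1,2,3,4} + HS p J {2,3,4,5} := by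
    have h := HS_submod p J hp ({1,2,3,4} : Finset (Fin 6)) {2,3,4,5}
    rw [(by decide : ({1,2,3,4} : Finset (Fin 6)) ∪ {2,3,4,5} = {1,2,3,4,5}),
        (by decide : ({1,2,3,4} : Finset (Fin 6)) ∩ {2,3,4,5} = {2,3,4})] at h
    exact h
  have q12 : HS p J {2,3,4} + HS p J {3} ≤ HS p J {2,3} + HS p J {3,4} := by
    have h := HS_submod p J hp ({2,3} : Finset (Fin 6)) {3,4}
    rw [(by decide : ({2,3} : Finset (Fin 6)) ∪ {3,4} = {2,3,4}),
        (by decide : ({2,3} : Finset (Fin 6)) ∩ {3,4} = {3})] at h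
    exact h
  have q13 : HS p J {0,1,3,4} + HS p J {0,1} ≤ HS p J {0,1,3} + HS p J {0,1,4} := by
    have h := HS_submod p J hp ({0,1,3} : Finset (Fin 6)) {0,1,4}
    rw [(by decide : ({0,1,3} : Finset (Fin 6)) ∪ {0,1,4} = {0,1,3,4}),
        (by decide : ({0,1,3} : Finset (Fin 6)) ∩ {0,1,4} = {0,1})] at h
    exact h
  have q14 : HS p J {2,3,4,5} + HS p J {2,4} ≤ HS p J {2,3,4} + HS p J {2,4,5} := by
    have h := HS_submod p J hp ({2,3,4} : Finset (Fin 6)) {2,4,5}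
    rw [(by decide : ({2,3,4} : Finset (Fin 6)) ∪ {2,4,5} = {2,3,4,5}),
        (by decide : ({2,3,4} : Finset (Fin 6)) ∩ {2,4,5} = {2,4})] at h
    exact h
  have m0 : HS p J {1,2,3,4,5} ≤ HS p J {0,1,2,3,4,5} :=
    HS_mono p J hp (by decide)
  have m1 : HS p J {0,2,3,4,5} ≤ HS p J {0,1,2,3,4,5} :=
    HS_mono p J hp (by decide)
  have m2 : HS p J {0,1,2,4,5} ≤ HS p J {0,1,2,3,4,5} :=
    HS_mono p J hp (by decide)
  rw [e03, e13, e23, e04, e14, e24, e05, e15, s3, s4, s0]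
  linarith [q0, q1, q2, q3, q4, q5, q6, q7, q8, q9, q10, q11, q12, q13, q14, m0, m1, m2]
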